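/- Let D be an acyclic oriented graph and let g ∈ ℕ. Then the graph L^g(D) contains no odd cycle with fewer than 2g+1 edges; i.e., the odd-girth of L^g(D) is at least 2g+1. -/

import Mathlib

open SimpleGraph

/-- The shift graph `G_{n,2}`: vertices are pairs `(i,j)` with `i < j` in `Fin n`,
and `(i,j)` is adjacent to `(k,l)` iff `j = k` or `l = i`. -/
def ShiftGraph (n : ℕ) : SimpleGraph {p : Fin n × Fin n // p.1 < p.2} :=
  SimpleGraph.fromRel (fun p q => p.1.2 = q.1.1)

/-- The arcs of a digraph `D`. -/
def Arcs {V : Type} (D : V → V → Prop) : Type := {e : V × V // D e.1 e.2}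

/-- The line digraph `L⃗(D)`: there is an arc from `(a,b)` to `(c,d)` iff `b = c`. -/
def LineDigraph {V : Type} (D : V → V → Prop) : Arcs D → Arcs D → Prop :=
  fun e f => e.1.2 = f.1.1

/-- The underlying undirected (simple) graph of a digraph. -/
def UG {V : Type} (D : V → V → Prop) : SimpleGraph V := SimpleGraph.fromRel D

/-- The undirected line graph `L(D)`: the underlying undirected graph of the line digraph,
in which two arcs are adjacent iff the head of one equals the tail of the other. -/
def LineGraph {V : Type} (D : V → V → Prop) : SimpleGraph (Arcs D) :=
  UG (LineDigraph D)

/-- A digraph is an oriented graph if its arc relation is irreflexive and between any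
two vertices at most one of the two opposite arcs is present. -/
def Oriented {V : Type} (D : V → V → Prop) : Prop :=
  Irreflexive D ∧ ∀ a b, D a b → ¬ D b a

/-- A digraph is acyclic if it contains no directed cycle, equivalently no vertex is
reachable from itself by a nonempty directed walk. -/
def DigraphAcyclic {V : Type} (D : V → V → Prop) : Prop :=
  ∀ v, ¬ Relation.TransGen D v v

/-- The iterated line digraph: `(IterLine V D g).1` is the vertex type of `L⃗^g(D)` and
`(IterLine V D g).2` is its arc relation. -/
def IterLine (V : Type) (D : V → V → Prop) : ℕ → (W : Type) × (W → W → Prop)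
  | 0 => ⟨V, D⟩
  | g + 1 => ⟨Arcs (IterLine V D g).2, LineDigraph (IterLine V D g).2⟩

/-- `l` is (the list of vertices of) a directed path from `x` to `y` in the digraph `D`:
consecutive vertices are joined by arcs, the vertices are pairwise distinct, and the
list starts at `x` and ends at `y`. -/
def IsDipath {V : Type} (D : V → V → Prop) (x y : V) (l : List V) : Prop :=
  l.Chain' D ∧ l.head? = some x ∧ l.getLast? = some y ∧ l.Nodup

/-- A digraph has at most one directed path from any vertex to any other vertex. -/
def UniqueDipaths {V : Type} (D : V → V → Prop) : Prop :=
  ∀ x y l₁ l₂, IsDipath D x y l₁ → IsDipath D x y l₂ → l₁ = l₂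

/-- `D` is an orientation of the simple graph `G`. -/
def IsOrientationOf {V : Type} (G : SimpleGraph V) (D : V → V → Prop) : Prop :=
  (∀ a b, D a b → G.Adj a b) ∧ (∀ a b, G.Adj a b → (D a b ∨ D b a)) ∧
    (∀ a b, D a b → ¬ D b a)

/-- A simple graph has the AOP property if it admits an acyclic orientation with at most
one directed path between any ordered pair of vertices. -/
def HasAOP {V : Type} (G : SimpleGraph V) : Prop :=
  ∃ D : V → V → Prop, IsOrientationOf G D ∧ DigraphAcyclic D ∧ UniqueDipaths D

/-- The tower function: `Tower g x` is `2^(2^(⋯^x))` with `g` twos. -/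
def Tower : ℕ → ℕ → ℕ
  | 0, x => x
  | i + 1, x => 2 ^ Tower i x

/-- The graph `G` has degeneracy at most `k`: every nonempty (induced subgraph on a) set
of vertices contains a vertex with at most `k` neighbours inside the set. -/
def DegenLE {V : Type} (G : SimpleGraph V) (k : ℕ) : Prop :=
  ∀ s : Set V, s.Nonempty → ∃ v ∈ s, ({u ∈ s | G.Adj v u} : Set V).ncard ≤ k

section OddGirthAux

attribute [local instance] Classical.propDecidable

/-- Number of changes between consecutive entries of a boolean list. -/
def chg : List Bool → ℕ
  | [] => 0
  | [_] => 0
  | a :: b :: r => (if a = b then 0 else 1) + chg (b :: r)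

lemma chg_cons_cons (a b : Bool) (r : List Bool) :
    chg (a :: b :: r) = (if a = b then 0 else 1) + chg (b :: r) := rfl

lemma chg_parity : ∀ (l : List Bool) (a : Bool),
    (chg (a :: l) + (if a = l.getLastD a then 0 else 1)) % 2 = 0
  | [], a => by simp [chg]
  | b :: r, a => by
    have ih := chg_parity r b
    rw [chg_cons_cons, List.getLastD_cons]
    generalize hgl : r.getLastD b = t at ih ⊢
    cases a <;> cases b <;> cases t <;> simp at ih ⊢ <;> omega

lemma chg_eq_zero : ∀ (l : List Bool) (a : Bool), chg (a :: l) = 0 → ∀ x ∈ l, x = a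
  | [], _, _, x, hx => by simp at hx
  | b :: r, a, h, x, hx => by
    rw [chg_cons_cons] at h
    have h1 : a = b := by by_contra hab; rw [if_neg hab] at h; omega
    have h2 : chg (b :: r) = 0 := by rw [if_pos h1] at h; simpa using h
    rcases List.mem_cons.mp hx with rfl | hx'
    · exact h1.symm
    · exact (chg_eq_zero r b h2 x hx').trans h1.symm

lemma getLastD_map {α β : Type*} (f : α → β) : ∀ (l : List α) (a : α),
    (l.map f).getLastD (f a) = f (l.getLastD a)
  | [], _ => rfl
  | b :: r, a => by
    rw [List.map_cons, List.getLastD_cons, List.getLastD_cons]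
    exact getLastD_map f r b

lemma list_getLast_eq {α : Type*} (l : List α) (h : l ≠ []) (d : α) (L : List α)
    (hE : l = d :: L) : l.getLast h = L.getLastD d := by
  subst hE; exact List.getLast_eq_getLastD h

lemma list_head_eq {α : Type*} (l : List α) (h : l ≠ []) (d : α) (L : List α)
    (hE : l = d :: L) : l.head h = d := by
  subst hE; rfl

variable {W : Type} {D' : W → W → Prop}

lemma transGen_line {a b : Arcs D'} (h : Relation.TransGen (LineDigraph D') a b) :
    Relation.TransGen D' a.1.1 b.1.1 := by
  induction h with
  | single h' => exact Relation.TransGen.single (h' ▸ a.2)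
  | @tail p q _ hpq ih => exact ih.tail (hpq ▸ p.2)

lemma lineAcyclic (h : DigraphAcyclic D') : DigraphAcyclic (LineDigraph D') :=
  fun e he => h e.1.1 (transGen_line he)

lemma arc_ne (h : DigraphAcyclic D') (e : Arcs D') : e.1.1 ≠ e.1.2 := by
  intro heq
  have h2 := e.2
  rw [← heq] at h2
  exact h e.1.1 (Relation.TransGen.single h2)

/-- The shared vertex of the two arcs of a dart of the line graph. -/
noncomputable def sh (D' : W → W → Prop) (d : (UG (LineDigraph D')).Dart) : W :=
  if d.fst.1.2 = d.snd.1.1 then d.fst.1.2 else d.fst.1.1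

/-- The "type" of a dart of the line graph: `true` if it is a forward shift. -/
noncomputable def Tb (D' : W → W → Prop) (d : (UG (LineDigraph D')).Dart) : Bool :=
  decide (d.fst.1.2 = d.snd.1.1)

lemma dart_or (d : (UG (LineDigraph D')).Dart) (h : ¬ d.fst.1.2 = d.snd.1.1) :
    d.snd.1.2 = d.fst.1.1 := by
  have ha := (SimpleGraph.fromRel_adj (LineDigraph D') d.fst d.snd).mp d.adj
  rcases ha.2 with h' | h'
  · exact absurd h' h
  · exact h'

lemma pair_adj (hac : DigraphAcyclic D') {d d' : (UG (LineDigraph D')).Dart}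
    (hdd : d.snd = d'.fst) (hT : Tb D' d = Tb D' d') :
    (UG D').Adj (sh D' d) (sh D' d') := by
  have hadj : (UG D').Adj d'.fst.1.1 d'.fst.1.2 :=
    (SimpleGraph.fromRel_adj D' d'.fst.1.1 d'.fst.1.2).mpr
      ⟨arc_ne hac d'.fst, Or.inl d'.fst.2⟩
  by_cases h1 : d.fst.1.2 = d.snd.1.1 <;> by_cases h2 : d'.fst.1.2 = d'.snd.1.1
  · simp only [sh]
    rw [if_pos h1, if_pos h2, h1, hdd]
    exact hadj
  · exfalso; simp [Tb, h1, h2] at hT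
  · exfalso; simp [Tb, h1, h2] at hT
  · have hb := dart_or d h1
    rw [hdd] at hb
    simp only [sh]
    rw [if_neg h1, if_neg h2, ← hb]
    exact hadj.symm

lemma pair_eq (hac : DigraphAcyclic D') {d d' : (UG (LineDigraph D')).Dart}
    (hdd : d.snd = d'.fst) (hT : Tb D' d ≠ Tb D' d') :
    sh D' d = sh D' d' := by
  by_cases h1 : d.fst.1.2 = d.snd.1.1 <;> by_cases h2 : d'.fst.1.2 = d'.snd.1.1
  · exfalso; simp [Tb, h1, h2] at hT
  · simp only [sh]
    rw [if_pos h1, if_neg h2, h1, hdd]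
  · have hb := dart_or d h1
    rw [hdd] at hb
    simp only [sh]
    rw [if_neg h1, if_pos h2, ← hb]
  · exfalso; simp [Tb, h1, h2] at hT

lemma build (hac : DigraphAcyclic D') :
    ∀ (L : List ((UG (LineDigraph D')).Dart)) (d : (UG (LineDigraph D')).Dart),
      List.Chain' (fun p q => p.snd = q.fst) (d :: L) →
      ∃ w : (UG D').Walk (sh D' d) (sh D' (L.getLastD d)),
        w.length + chg ((d :: L).map (Tb D')) = L.length
  | [], d, _ => ⟨SimpleGraph.Walk.nil, by simp [chg]; rfl⟩
  | d' :: L', d, hch => by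
    replace hch := List.isChain_cons_cons.mp hch
    obtain ⟨h1, hch'⟩ := hch
    obtain ⟨w', hw'⟩ := build hac L' d' hch'
    rw [List.getLastD_cons]
    by_cases hT : Tb D' d = Tb D' d'
    · refine ⟨SimpleGraph.Walk.cons (pair_adj hac h1 hT) w', ?_⟩
      rw [List.map_cons, List.map_cons, chg_cons_cons, if_pos hT,
        SimpleGraph.Walk.length_cons]
      rw [List.map_cons] at hw'
      simp only [List.length_cons]
      omega
    · refine ⟨w'.copy (pair_eq hac h1 hT).symm rfl, ?_⟩
      rw [List.map_cons, List.map_cons, chg_cons_cons, if_neg hT,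
        SimpleGraph.Walk.length_copy]
      rw [List.map_cons] at hw'
      simp only [List.length_cons]
      omega

lemma chain_transGen {S : Arcs D' → Arcs D' → Prop} :
    ∀ (L : List ((UG (LineDigraph D')).Dart)) (d : (UG (LineDigraph D')).Dart),
      List.Chain' (fun p q => p.snd = q.fst) (d :: L) →
      (∀ p ∈ d :: L, S p.fst p.snd) →
      Relation.TransGen S d.fst (L.getLastD d).snd
  | [], d, _, hall => Relation.TransGen.single (hall d (by simp))
  | d' :: L', d, hch, hall => by
    replace hch := List.isChain_cons_cons.mp hch
    have ih := chain_transGen L' d' hch.2 (fun p hp => hall p (by simp at hp ⊢; tauto))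
    rw [List.getLastD_cons]
    rw [← hch.1] at ih
    exact Relation.TransGen.head (hall d (by simp)) ih

lemma stepLemma (hac : DigraphAcyclic D') (k : ℕ)
    (hk : ∀ (x : W) (w : (UG D').Walk x x), Odd w.length → k ≤ w.length) :
    ∀ (x : Arcs D') (w : (UG (LineDigraph D')).Walk x x),
      Odd w.length → k + 2 ≤ w.length := by
  intro x w hodd
  have hmpos : 0 < w.length := hodd.pos
  have hdne : w.darts ≠ [] := by
    intro h
    have h2 := SimpleGraph.Walk.length_darts w
    rw [h] at h2
    simp at h2
    omega
  obtain ⟨d₀, Lt, hL⟩ := List.exists_cons_of_ne_nil hdne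
  have hchain : List.Chain' (fun p q => (p : (UG (LineDigraph D')).Dart).snd = q.fst)
      (d₀ :: Lt) := by
    have h3 := w.isChain_dartAdj_darts
    rw [hL] at h3
    exact h3
  have hlen : Lt.length + 1 = w.length := by
    rw [← SimpleGraph.Walk.length_darts w, hL]
    simp
  have hfst : d₀.fst = x := by
    have h2 : (w.darts.head hdne).fst = x := by
      rw [SimpleGraph.Walk.head_darts_eq_firstDart]; rfl
    rw [list_head_eq w.darts hdne d₀ Lt hL] at h2
    exact h2
  have hclose : (Lt.getLastD d₀).snd = d₀.fst := by
    have h1 : (w.darts.getLast hdne).snd = x := by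
      rw [SimpleGraph.Walk.getLast_darts_eq_lastDart]; rfl
    rw [list_getLast_eq w.darts hdne d₀ Lt hL] at h1
    rw [h1, hfst]
  set dl := Lt.getLastD d₀ with hdl
  obtain ⟨w₁, hw₁⟩ := build hac Lt d₀ hchain
  set C := chg ((d₀ :: Lt).map (Tb D')) + (if Tb D' dl = Tb D' d₀ then 0 else 1) with hC
  have hex : ∃ w₂ : (UG D').Walk (sh D' d₀) (sh D' d₀), w₂.length + C = w.length := by
    by_cases hT : Tb D' dl = Tb D' d₀
    · refine ⟨w₁.concat (pair_adj hac hclose hT), ?_⟩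
      rw [SimpleGraph.Walk.length_concat, hC, if_pos hT]
      omega
    · refine ⟨w₁.copy rfl (pair_eq hac hclose hT), ?_⟩
      rw [SimpleGraph.Walk.length_copy, hC, if_neg hT]
      omega
  obtain ⟨w₂, hw₂⟩ := hex
  have hCpar : C % 2 = 0 := by
    have hp := chg_parity (Lt.map (Tb D')) (Tb D' d₀)
    rw [getLastD_map (Tb D') Lt d₀, ← hdl] at hp
    rw [hC, List.map_cons]
    rcases eq_or_ne (Tb D' d₀) (Tb D' dl) with he | he
    · rw [if_pos he] at hp
      rw [if_pos he.symm]
      omega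
    · rw [if_neg he] at hp
      rw [if_neg (Ne.symm he)]
      omega
  have hCne : C ≠ 0 := by
    intro h0
    have hchg0 : chg ((d₀ :: Lt).map (Tb D')) = 0 := by omega
    have hall : ∀ p ∈ d₀ :: Lt, Tb D' p = Tb D' d₀ := by
      intro p hp
      rcases List.mem_cons.mp hp with rfl | hp'
      · rfl
      · rw [List.map_cons] at hchg0
        exact chg_eq_zero (Lt.map (Tb D')) (Tb D' d₀) hchg0 (Tb D' p)
          (List.mem_map_of_mem (f := Tb D') hp')
    cases hTb : Tb D' d₀ with
    | false =>
      have hB : ∀ p ∈ d₀ :: Lt, (LineDigraph D') p.snd p.fst := by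
        intro p hp
        have h5 := hall p hp
        rw [hTb] at h5
        have hnp : ¬ p.fst.1.2 = p.snd.1.1 := by simpa [Tb] using h5
        exact dart_or p hnp
      have htg := chain_transGen (S := fun a b => LineDigraph D' b a) Lt d₀ hchain hB
      rw [← hdl, hclose] at htg
      exact lineAcyclic hac d₀.fst (Relation.transGen_swap.mp htg)
    | true =>
      have hF : ∀ p ∈ d₀ :: Lt, LineDigraph D' p.fst p.snd := by
        intro p hp
        have h5 := hall p hp
        rw [hTb] at h5
        simpa [Tb, LineDigraph] using h5
      have htg := chain_transGen Lt d₀ hchain hF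
      rw [← hdl, hclose] at htg
      exact lineAcyclic hac d₀.fst htg
  have hw2odd : Odd w₂.length := by
    rw [Nat.odd_iff] at hodd ⊢
    omega
  have hfin := hk _ w₂ hw2odd
  omega

end OddGirthAux

lemma iter_acyclic {V : Type} {D : V → V → Prop} (h : DigraphAcyclic D) :
    ∀ g : ℕ, DigraphAcyclic (IterLine V D g).2
  | 0 => h
  | g + 1 => lineAcyclic (iter_acyclic h g)

/-- For any acyclic oriented graph `D` and any `g`, the graph
`L^g(D)` has no odd cycle with fewer than `2g + 1` edges. -/
theorem stmt_9 {V : Type} [Fintype V] (D : V → V → Prop) (hor : Oriented D)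
    (hacyc : DigraphAcyclic D) (g : ℕ)
    (x : (IterLine V D g).1) (w : (UG (IterLine V D g).2).Walk x x)
    (hw : w.IsCycle) (hlen : Odd w.length) :
    2 * g + 1 ≤ w.length := by
  have main : ∀ g (x : (IterLine V D g).1) (w : (UG (IterLine V D g).2).Walk x x),
      Odd w.length → 2 * g + 1 ≤ w.length := by
    intro g
    induction g with
    | zero => intro x w h; have := h.pos; omega
    | succ g ih =>
      intro x w h
      have hstep := stepLemma (iter_acyclic hacyc g) (2 * g + 1) ih x w h
      exact le_trans (le_of_eq (by ring)) hstep
  exact main g x w hlen
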